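/- Let A_n = Spec T_n (n ≥ 1) be affine schemes over a field K with closed embeddings τ_{n,n+1} : A_n → A_{n+1} and morphisms π_{n+1,n} : A_{n+1} → A_n satisfying π_{n+1,n} ∘ τ_{n,n+1} = id; let Y_n ⊆ A_n be closed subschemes mapped into each other by both maps; let G_1 ⊆ G_2 ⊆ ... be groups with G_n acting on A_n stabilising Y_n, with π_{n+1,n} being G_n-equivariant, and assume for all q ≥ n ≥ m and g ∈ G_q there exist p ≤ m, g' ∈ G_n, g'' ∈ G_m with π_{q,m} g τ_{n,q} = g'' τ_{p,m} π_{n,p} g'. Let A_∞, Y_∞, G be the corresponding limits. Then for any K-algebra S and any fixed m, the following are equivalent: (1) for all n ≥ m, Y_n(S) = {y ∈ A_n(S) : π_{n,m}(g·y) ∈ Y_m(S) for all g ∈ G_n}; (2) Y_∞(S) = {y ∈ A_∞(S) : π_{∞,m}(g·y) ∈ Y_m(S) for all g ∈ G}. -/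

import Mathlib

section ChainSetup

variable {K : Type*} [Field K]
variable {T : ℕ → Type*} [∀ n, CommRing (T n)] [∀ n, Algebra K (T n)]

/-- Composite `π_{n,m}^* : T m →ₐ T n` of the one-step duals
`πs k : T k →ₐ T (k+1)` of the projections `π_{k+1,k} : A_{k+1} → A_k`. -/
noncomputable def piB (πs : ∀ n, T n →ₐ[K] T (n + 1)) {m n : ℕ} (h : m ≤ n) :
    T m →ₐ[K] T n :=
  Nat.leRecOn (C := fun k => T m →ₐ[K] T k) h
    (fun {k} f => (πs k).comp f) (AlgHom.id K (T m))

/-- Composite `τ_{m,n}^* : T n →ₐ T m` of the one-step duals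
`τs k : T (k+1) →ₐ T k` of the closed embeddings `τ_{k,k+1} : A_k → A_{k+1}`. -/
noncomputable def tauB (τs : ∀ n, T (n + 1) →ₐ[K] T n) {m n : ℕ} (h : m ≤ n) :
    T n →ₐ[K] T m :=
  Nat.leRecOn (C := fun k => T k →ₐ[K] T m) h
    (fun {k} f => f.comp (τs k)) (AlgHom.id K (T m))

end ChainSetup

section HelperLemmas

variable {K : Type*} [Field K]
variable {T : ℕ → Type*} [∀ n, CommRing (T n)] [∀ n, Algebra K (T n)]
variable (πs : ∀ n, T n →ₐ[K] T (n + 1)) (τs : ∀ n, T (n + 1) →ₐ[K] T n)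

lemma piB_self {m : ℕ} (h : m ≤ m) : piB πs h = AlgHom.id K (T m) :=
  Nat.leRecOn_self _

lemma piB_succ {m n : ℕ} (h : m ≤ n) (h2 : m ≤ n + 1) :
    piB πs h2 = (πs n).comp (piB πs h) :=
  Nat.leRecOn_succ h _

lemma tauB_self {m : ℕ} (h : m ≤ m) : tauB τs h = AlgHom.id K (T m) :=
  Nat.leRecOn_self _

lemma tauB_succ {m n : ℕ} (h : m ≤ n) (h2 : m ≤ n + 1) :
    tauB τs h2 = (tauB τs h).comp (τs n) :=
  Nat.leRecOn_succ h _

lemma piB_trans {m n q : ℕ} (h1 : m ≤ n) (h2 : n ≤ q) :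
    (piB πs h2).comp (piB πs h1) = piB πs (h1.trans h2) := by
  induction q, h2 using Nat.le_induction with
  | base => rw [piB_self, AlgHom.id_comp]
  | succ q hq ih =>
    rw [piB_succ πs hq, piB_succ πs (h1.trans hq), AlgHom.comp_assoc, ih]

lemma piB_mem (I : ∀ n, Ideal (T n)) (hπI : ∀ n, ∀ f ∈ I n, πs n f ∈ I (n + 1))
    {m n : ℕ} (h : m ≤ n) {f : T m} (hf : f ∈ I m) : piB πs h f ∈ I n := by
  induction n, h using Nat.le_induction with
  | base => rw [piB_self]; exact hf
  | succ n hn ih => rw [piB_succ πs hn]; exact hπI n _ ih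

lemma tauB_mem (I : ∀ n, Ideal (T n)) (hτI : ∀ n, ∀ f ∈ I (n + 1), τs n f ∈ I n)
    {p q : ℕ} (h : p ≤ q) : ∀ f ∈ I q, tauB τs h f ∈ I p := by
  induction q, h using Nat.le_induction with
  | base => intro f hf; rw [tauB_self]; exact hf
  | succ q hq ih => intro f hf; rw [tauB_succ τs hq]; exact ih _ (hτI q f hf)

lemma piB_act {Γ : Type*} [Group Γ] (Gn : ℕ → Subgroup Γ) (mono : Monotone Gn)
    (actT : ∀ n, (Gn n) → (T n ≃ₐ[K] T n))
    (hπG : ∀ n (g : Γ) (hg : g ∈ Gn n) (x : T n),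
      πs n (actT n ⟨g, hg⟩ x) = actT (n + 1) ⟨g, mono (Nat.le_succ n) hg⟩ (πs n x))
    {n N : ℕ} (h : n ≤ N) (g : Γ) (hg : g ∈ Gn n) (x : T n) :
    piB πs h (actT n ⟨g, hg⟩ x) = actT N ⟨g, mono h hg⟩ (piB πs h x) := by
  induction N, h using Nat.le_induction with
  | base => rw [piB_self]; rfl
  | succ N hN ih =>
    rw [piB_succ πs hN]
    simp only [AlgHom.coe_comp, Function.comp_apply]
    rw [ih, hπG N g (mono hN hg)]

end HelperLemmas

/-- Lemma on chains of schemes: in the set-up of affine schemes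
`A_n = Spec T_n` with embeddings `τ`, projections `π`, closed subschemes
`Y_n = V(I_n)`, and nested groups `G_n` acting compatibly and satisfying the
commutation condition (*), for any `K`-algebra `S` and any fixed `m` the
following are equivalent:
(1) for all `n ≥ m`, `Y_n(S) = {y ∈ A_n(S) : π_{n,m}(g·y) ∈ Y_m(S) ∀ g ∈ G_n}`;
(2) `Y_∞(S) = {y ∈ A_∞(S) : π_{∞,m}(g·y) ∈ Y_m(S) ∀ g ∈ G}`,
where `A_∞(S)` is realised as compatible families `(y_n)_n` of `S`-points. -/
theorem chain_finiteness_equivalence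
    {K : Type*} [Field K] {S : Type*} [CommRing S] [Algebra K S]
    {T : ℕ → Type*} [∀ n, CommRing (T n)] [∀ n, Algebra K (T n)]
    (πs : ∀ n, T n →ₐ[K] T (n + 1)) (τs : ∀ n, T (n + 1) →ₐ[K] T n)
    (hτπ : ∀ n, (τs n).comp (πs n) = AlgHom.id K (T n))
    (I : ∀ n, Ideal (T n))
    (hπI : ∀ n, ∀ f ∈ I n, πs n f ∈ I (n + 1))
    (hτI : ∀ n, ∀ f ∈ I (n + 1), τs n f ∈ I n)
    {Γ : Type*} [Group Γ] (Gn : ℕ → Subgroup Γ) (mono : Monotone Gn)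
    (actT : ∀ n, (Gn n) → (T n ≃ₐ[K] T n))
    (hone : ∀ n (x : T n), actT n 1 x = x)
    (hmul : ∀ n (g₁ g₂ : Gn n) (x : T n),
      actT n (g₁ * g₂) x = actT n g₁ (actT n g₂ x))
    (hGI : ∀ n (g : Gn n), ∀ f ∈ I n, actT n g f ∈ I n)
    (hπG : ∀ n (g : Γ) (hg : g ∈ Gn n) (x : T n),
      πs n (actT n ⟨g, hg⟩ x) = actT (n + 1) ⟨g, mono (Nat.le_succ n) hg⟩ (πs n x))
    (hstar : ∀ {m n q : ℕ} (hmn : m ≤ n) (hnq : n ≤ q) (g : Γ) (hg : g ∈ Gn q),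
      ∃ (p : ℕ) (hpm : p ≤ m) (g' : Γ) (hg' : g' ∈ Gn n) (g'' : Γ) (hg'' : g'' ∈ Gn m),
        (tauB τs hnq).comp ((actT q ⟨g, hg⟩).toAlgHom.comp (piB πs (hmn.trans hnq))) =
          (actT n ⟨g', hg'⟩).toAlgHom.comp ((piB πs (hpm.trans hmn)).comp
            ((tauB τs hpm).comp (actT m ⟨g'', hg''⟩).toAlgHom)))
    (m : ℕ) :
    (∀ n (h : m ≤ n) (y : T n →ₐ[K] S),
        ((∀ f ∈ I n, y f = 0) ↔
          ∀ (g : Γ) (hg : g ∈ Gn n), ∀ f ∈ I m, y (actT n ⟨g, hg⟩ (piB πs h f)) = 0)) ↔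
      (∀ y : ∀ n, T n →ₐ[K] S, (∀ n, (y (n + 1)).comp (πs n) = y n) →
        ((∀ n, ∀ f ∈ I n, y n f = 0) ↔
          ∀ (q : ℕ) (h : m ≤ q) (g : Γ) (hg : g ∈ Gn q), ∀ f ∈ I m,
            y q (actT q ⟨g, hg⟩ (piB πs h f)) = 0)) := by
  have easy : ∀ (n : ℕ) (h : m ≤ n) (y : T n →ₐ[K] S), (∀ f ∈ I n, y f = 0) →
      ∀ (g : Γ) (hg : g ∈ Gn n), ∀ f ∈ I m, y (actT n ⟨g, hg⟩ (piB πs h f)) = 0 := by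
    intro n h y hy g hg f hf
    exact hy _ (hGI n ⟨g, hg⟩ _ (piB_mem πs I hπI h hf))
  constructor
  · -- (1) → (2)
    intro H1 y compat
    have key : ∀ (k l : ℕ) (h : k ≤ l) (x : T k), y l (piB πs h x) = y k x := by
      intro k l h x
      induction l, h using Nat.le_induction with
      | base => rw [piB_self]; rfl
      | succ l hl ih =>
        rw [piB_succ πs hl]
        have hc := DFunLike.congr_fun (compat l) (piB πs hl x)
        simp only [AlgHom.coe_comp, Function.comp_apply] at hc ⊢
        rw [hc, ih]
    constructor
    · intro hall q hq g hg f hf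
      exact easy q hq (y q) (hall q) g hg f hf
    · intro hcond n
      rcases le_or_gt m n with hmn | hnm
      · exact (H1 n hmn (y n)).mpr (fun g hg f hf => hcond n hmn g hg f hf)
      · intro f hf
        have hm : ∀ f ∈ I m, y m f = 0 :=
          (H1 m le_rfl (y m)).mpr (fun g hg f hf => hcond m le_rfl g hg f hf)
        rw [← key n m hnm.le f]
        exact hm _ (piB_mem πs I hπI hnm.le hf)
  · -- (2) → (1)
    intro H2 n h y
    constructor
    · exact easy n h y
    · intro hy
      let Y : ∀ k, T k →ₐ[K] S := fun k =>
        if hk : k ≤ n then y.comp (piB πs hk) else y.comp (tauB τs (le_of_not_ge hk))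
      have hYle : ∀ (k : ℕ) (hk : k ≤ n), Y k = y.comp (piB πs hk) := by
        intro k hk; simp only [Y, dif_pos hk]
      have hYge : ∀ (k : ℕ) (hk : ¬ k ≤ n), Y k = y.comp (tauB τs (le_of_not_ge hk)) := by
        intro k hk; simp only [Y, dif_neg hk]
      have compat : ∀ k, (Y (k + 1)).comp (πs k) = Y k := by
        intro k
        by_cases hk : k + 1 ≤ n
        · have hk' : k ≤ n := (Nat.le_succ k).trans hk
          rw [hYle (k + 1) hk, hYle k hk', AlgHom.comp_assoc]
          congr 1
          have hπ : πs k = piB πs (Nat.le_succ k) := by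
            rw [piB_succ πs le_rfl, piB_self, AlgHom.comp_id]
          rw [hπ, piB_trans]
        · have hk2 : n ≤ k := by omega
          rw [hYge (k + 1) hk, AlgHom.comp_assoc, tauB_succ τs hk2,
            AlgHom.comp_assoc, hτπ k, AlgHom.comp_id]
          by_cases hk4 : k ≤ n
          · have hkn : k = n := le_antisymm hk4 hk2
            subst hkn
            rw [hYle k le_rfl, tauB_self, piB_self]
          · rw [hYge k hk4]
      have cond : ∀ (q : ℕ) (hq : m ≤ q) (g : Γ) (hg : g ∈ Gn q), ∀ f ∈ I m,
          Y q (actT q ⟨g, hg⟩ (piB πs hq f)) = 0 := by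
        intro q hq g hg f hf
        by_cases hqn : q ≤ n
        · rw [hYle q hqn]
          simp only [AlgHom.coe_comp, Function.comp_apply]
          rw [piB_act πs Gn mono actT hπG hqn g hg]
          rw [show piB πs hqn (piB πs hq f) = piB πs (hq.trans hqn) f from
            DFunLike.congr_fun (piB_trans πs hq hqn) f]
          exact hy g (mono hqn hg) f hf
        · have hnq : n ≤ q := le_of_not_ge hqn
          obtain ⟨p, hpm, g', hg', g'', hg'', heq⟩ := hstar h hnq g hg
          rw [hYge q hqn]
          simp only [AlgHom.coe_comp, Function.comp_apply]
          have happ := DFunLike.congr_fun heq f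
          simp only [AlgHom.coe_comp, Function.comp_apply, AlgEquiv.toAlgHom_eq_coe,
            AlgHom.coe_coe, AlgEquiv.coe_algHom] at happ
          rw [happ]
          have hf₁m : tauB τs hpm (actT m ⟨g'', hg''⟩ f) ∈ I p :=
            tauB_mem τs I hτI hpm _ (hGI m ⟨g'', hg''⟩ f hf)
          rw [show piB πs (hpm.trans h) (tauB τs hpm (actT m ⟨g'', hg''⟩ f)) =
              piB πs h (piB πs hpm (tauB τs hpm (actT m ⟨g'', hg''⟩ f))) from
            (DFunLike.congr_fun (piB_trans πs hpm h) _).symm]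
          exact hy g' hg' _ (piB_mem πs I hπI hpm hf₁m)
      intro f hf
      have hall := (H2 Y compat).mpr cond n f hf
      rwa [hYle n le_rfl, AlgHom.comp_apply, piB_self, AlgHom.id_apply] at hall
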